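/- For all integers n, m with 1 ≤ m ≤ n−1, the following binomial identity holds: Σ_{j=0}^{m} ( m(n−m) − (m+1)(n−m+1)·(m−j)/(m−j+1) ) · C(m,j) · C(n−m, m−j) = 0. -/

import Mathlib

lemma qchoose (b r : ℕ) :
    ((r : ℚ) + 1) * (b.choose (r + 1) : ℚ) = ((b : ℚ) - r) * (b.choose r : ℚ) := by
  rcases le_or_gt r b with h | h
  · have h0 := Nat.choose_succ_right_eq b r
    have h1 : (b.choose (r + 1) : ℚ) * ((r : ℚ) + 1) = (b.choose r : ℚ) * ((b - r : ℕ) : ℚ) := by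
      exact_mod_cast h0
    rw [Nat.cast_sub h] at h1
    linarith
  · rw [Nat.choose_eq_zero_of_lt h, Nat.choose_eq_zero_of_lt (by omega)]
    push_cast
    ring

lemma key (m b : ℕ) : ∀ K, K ≤ m + 1 →
    ∑ j ∈ Finset.range K,
      ((m : ℚ) * (b : ℚ) -
          ((m : ℚ) + 1) * ((b : ℚ) + 1) * ((m : ℚ) - j) / ((m : ℚ) - j + 1)) *
        (m.choose j : ℚ) * (b.choose (m - j) : ℚ)
      = -(K : ℚ) * (m.choose K : ℚ) * (b.choose (m + 1 - K) : ℚ) := by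
  intro K hK
  induction K with
  | zero => simp
  | succ K ih =>
    have hKm : K ≤ m := by omega
    rw [Finset.sum_range_succ, ih (by omega)]
    set r := m - K with hrdef
    have hmr : (m : ℚ) = (K : ℚ) + (r : ℚ) := by
      exact_mod_cast (show m = K + r by omega)
    have hmk : (m : ℚ) - (K : ℚ) = (r : ℚ) := by rw [hmr]; ring
    have he1 : m + 1 - K = r + 1 := by omega
    have he2 : m + 1 - (K + 1) = r := by omega
    have h1 := qchoose m K
    have h2 := qchoose b r
    rw [hmk] at h1
    rw [he1, he2, hmk]
    have hr1 : (r : ℚ) + 1 ≠ 0 := by positivity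
    field_simp
    push_cast
    linear_combination (-(K : ℚ) * (m.choose K : ℚ)) * h2 +
      (((r : ℚ) + 1) * (b.choose r : ℚ)) * h1 +
      (((b : ℚ) - r) * (m.choose K : ℚ) * (b.choose r : ℚ)) * hmr

theorem stmt_5 (n m : ℕ) (hm1 : 1 ≤ m) (hmn : m ≤ n - 1) :
    ∑ j ∈ Finset.range (m + 1),
      ((m : ℚ) * ((n : ℚ) - m) -
          ((m : ℚ) + 1) * ((n : ℚ) - m + 1) * ((m : ℚ) - j) / ((m : ℚ) - j + 1)) *
        (m.choose j : ℚ) * ((n - m).choose (m - j) : ℚ) = 0 := by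
  have hmn' : m ≤ n := by omega
  have hb : (n : ℚ) - m = ((n - m : ℕ) : ℚ) := by push_cast [hmn']; ring
  rw [hb, key m (n - m) (m + 1) le_rfl,
    Nat.choose_eq_zero_of_lt (by omega : m < m + 1)]
  push_cast
  ring
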